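/- Let $A \in \mathbb{C}^{T \times P}$ have unit-norm columns and Babel function $\mu_1$, and suppose $\mu_1(L) < 1 - \mu_1(L-1)$ for some $L \geq 1$. Then for any $L$-sparse $x$ with $\mathrm{supp}(x) = \Lambda$, $|\Lambda| \leq L$, and $y = Ax \neq 0$, the maximum of $|\langle a_j, y \rangle|$ over all columns is attained only at indices in $\Lambda$: $\max_{j \in \Lambda} |\langle a_j, y \rangle| > \max_{j \notin \Lambda} |\langle a_j, y \rangle|$. (This is the key step guaranteeing OMP selects a correct index in the noiseless case.) -/

import Mathlib

/-- Tropp's exact recovery condition: if `μ₁(L) < 1 - μ₁(L-1)`,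
then for any `L`-sparse `x` with support `Λ` and `y = Ax ≠ 0`, the maximal
correlation `|⟨a_j, y⟩|` over the support strictly dominates every correlation
outside the support. -/
theorem stmt_17 (T P L : ℕ) (hL : 1 ≤ L)
    (A : Matrix (Fin T) (Fin P) ℂ)
    (hnorm : ∀ j, ∑ t, ‖A t j‖ ^ 2 = 1)
    (μ₁ : ℕ → ℝ)
    (hμ₁ : ∀ l, IsGreatest
      {x : ℝ | ∃ (Ω : Finset (Fin P)) (ω : Fin P),
        Ω.card ≤ l ∧ ω ∉ Ω ∧
        x = ∑ j ∈ Ω, ‖∑ t, (starRingEnd ℂ) (A t j) * A t ω‖} (μ₁ l))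
    (hERC : μ₁ L < 1 - μ₁ (L - 1))
    (x : Fin P → ℂ) (Λ : Finset (Fin P))
    (hΛ : ∀ j, x j ≠ 0 ↔ j ∈ Λ) (hne : Λ.Nonempty) (hcard : Λ.card ≤ L)
    (y : Fin T → ℂ) (hy : y = A.mulVec x) (hy0 : y ≠ 0) :
    ∀ ω ∉ Λ,
      ‖∑ t, (starRingEnd ℂ) (A t ω) * y t‖ <
        Λ.sup' hne (fun j => ‖∑ t, (starRingEnd ℂ) (A t j) * y t‖) := by
  intro ω hω
  set G : Fin P → Fin P → ℂ := fun j k => ∑ t, (starRingEnd ℂ) (A t j) * A t k with hG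
  -- correlations rewritten via the Gram matrix
  have key : ∀ j, (∑ t, (starRingEnd ℂ) (A t j) * y t) = ∑ k ∈ Λ, G j k * x k := by
    intro j
    subst hy
    have h1 : ∀ t, (starRingEnd ℂ) (A t j) * (A.mulVec x) t
        = ∑ k, (starRingEnd ℂ) (A t j) * A t k * x k := by
      intro t
      simp [Matrix.mulVec, dotProduct, Finset.mul_sum, mul_assoc]
    rw [Finset.sum_congr rfl (fun t _ => h1 t), Finset.sum_comm]
    have h2 : ∀ k, (∑ t, (starRingEnd ℂ) (A t j) * A t k * x k) = G j k * x k := by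
      intro k; rw [hG, Finset.sum_mul]
    rw [Finset.sum_congr rfl (fun k _ => h2 k)]
    refine (Finset.sum_subset (Finset.subset_univ Λ) ?_).symm
    intro k _ hk
    have hx : x k = 0 := by
      by_contra h; exact hk ((hΛ k).mp h)
    simp [hx]
  -- diagonal of the Gram matrix is 1
  have hGdiag : ∀ j, G j j = 1 := by
    intro j
    have h1 : ∀ t, (starRingEnd ℂ) (A t j) * A t j = ((‖A t j‖)^2 : ℝ) := by
      intro t
      rw [mul_comm, Complex.mul_conj, ← Complex.sq_norm]
    calc G j j = ∑ t, (((‖A t j‖)^2 : ℝ) : ℂ) :=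
          Finset.sum_congr rfl (fun t _ => h1 t)
      _ = ((∑ t, (‖A t j‖)^2 : ℝ) : ℂ) := by norm_cast
      _ = 1 := by rw [hnorm j]; norm_num
  -- conjugate symmetry of absolute values
  have hGsymm : ∀ j k, ‖G j k‖ = ‖G k j‖ := by
    intro j k
    rw [← Complex.norm_conj (G k j)]
    congr 1
    simp only [hG, map_sum, map_mul, Complex.conj_conj, RingHomCompTriple.comp_apply, RingHom.id_apply]
    exact Finset.sum_congr rfl (fun t _ => by ring)
  -- the maximal coefficient
  obtain ⟨j₀, hj₀, hmax⟩ := Λ.exists_max_image (fun k => ‖x k‖) hne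
  set M : ℝ := ‖x j₀‖ with hM
  have hMpos : 0 < M := by
    have : x j₀ ≠ 0 := (hΛ j₀).mpr hj₀
    simpa [hM] using (norm_pos_iff.mpr this)
  -- Babel bound off the support
  have bound2 : ∑ k ∈ Λ, ‖G k ω‖ ≤ μ₁ L :=
    (hμ₁ L).2 ⟨Λ, ω, hcard, hω, rfl⟩
  -- Babel bound on the support minus j₀
  have bound1 : ∑ k ∈ Λ.erase j₀, ‖G k j₀‖ ≤ μ₁ (L - 1) := by
    refine (hμ₁ (L - 1)).2 ⟨Λ.erase j₀, j₀, ?_, Finset.notMem_erase _ _, rfl⟩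
    rw [Finset.card_erase_of_mem hj₀]
    exact Nat.sub_le_sub_right hcard 1
  have bound1' : ∑ k ∈ Λ.erase j₀, ‖G j₀ k‖ ≤ μ₁ (L - 1) := by
    calc ∑ k ∈ Λ.erase j₀, ‖G j₀ k‖
        = ∑ k ∈ Λ.erase j₀, ‖G k j₀‖ :=
          Finset.sum_congr rfl (fun k _ => hGsymm j₀ k)
      _ ≤ μ₁ (L - 1) := bound1
  -- upper bound for the off-support correlation
  have hub : ‖∑ t, (starRingEnd ℂ) (A t ω) * y t‖ ≤ M * μ₁ L := by
    rw [key ω]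
    calc ‖∑ k ∈ Λ, G ω k * x k‖
        ≤ ∑ k ∈ Λ, ‖G ω k * x k‖ := norm_sum_le _ _
      _ = ∑ k ∈ Λ, ‖G ω k‖ * ‖x k‖ := by
          simp [map_mul]
      _ ≤ ∑ k ∈ Λ, ‖G ω k‖ * M := by
          refine Finset.sum_le_sum (fun k hk => ?_)
          exact mul_le_mul_of_nonneg_left (hmax k hk) (norm_nonneg _)
      _ = (∑ k ∈ Λ, ‖G ω k‖) * M := by rw [Finset.sum_mul]
      _ = (∑ k ∈ Λ, ‖G k ω‖) * M := by
          rw [Finset.sum_congr rfl (fun k _ => hGsymm ω k)]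
      _ ≤ μ₁ L * M := mul_le_mul_of_nonneg_right bound2 (le_of_lt hMpos)
      _ = M * μ₁ L := mul_comm _ _
  -- lower bound for the correlation at j₀
  have hlb : M * (1 - μ₁ (L - 1)) ≤ ‖∑ t, (starRingEnd ℂ) (A t j₀) * y t‖ := by
    rw [key j₀]
    have split : (∑ k ∈ Λ, G j₀ k * x k) = x j₀ + ∑ k ∈ Λ.erase j₀, G j₀ k * x k := by
      rw [← Finset.add_sum_erase _ _ hj₀, hGdiag, one_mul]
    set r : ℂ := ∑ k ∈ Λ.erase j₀, G j₀ k * x k with hr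
    have habsr : ‖r‖ ≤ M * μ₁ (L - 1) := by
      calc ‖r‖ ≤ ∑ k ∈ Λ.erase j₀, ‖G j₀ k * x k‖ :=
            norm_sum_le _ _
        _ = ∑ k ∈ Λ.erase j₀, ‖G j₀ k‖ * ‖x k‖ := by
            simp [map_mul]
        _ ≤ ∑ k ∈ Λ.erase j₀, ‖G j₀ k‖ * M := by
            refine Finset.sum_le_sum (fun k hk => ?_)
            exact mul_le_mul_of_nonneg_left (hmax k (Finset.mem_of_mem_erase hk))
              (norm_nonneg _)
        _ = (∑ k ∈ Λ.erase j₀, ‖G j₀ k‖) * M := by rw [Finset.sum_mul]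
        _ ≤ μ₁ (L - 1) * M := mul_le_mul_of_nonneg_right bound1' (le_of_lt hMpos)
        _ = M * μ₁ (L - 1) := mul_comm _ _
    have htri : ‖x j₀‖ - ‖r‖ ≤ ‖x j₀ + r‖ := by
      have h := norm_add_le (x j₀ + r) (-r)
      rw [add_neg_cancel_right, norm_neg] at h
      linarith
    rw [split]
    have : M * (1 - μ₁ (L - 1)) ≤ ‖x j₀‖ - ‖r‖ := by
      rw [hM]; nlinarith [habsr]
    linarith
  -- conclude
  have hstep : M * μ₁ L < M * (1 - μ₁ (L - 1)) :=
    mul_lt_mul_of_pos_left hERC hMpos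
  have hsup : ‖∑ t, (starRingEnd ℂ) (A t j₀) * y t‖ ≤
      Λ.sup' hne (fun j => ‖∑ t, (starRingEnd ℂ) (A t j) * y t‖) :=
    Finset.le_sup' (fun j => ‖∑ t, (starRingEnd ℂ) (A t j) * y t‖) hj₀
  linarith
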